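/- Let f: ℝⁿ → ℝ be convex, twice continuously differentiable, with M-Lipschitz Hessian. Define ψ(σ, y) = (1/σ)‖(∇²f(y) + σI)^{-1}∇f(y)‖. Then for any y, ȳ ∈ ℝⁿ and σ > 0: |ψ(σ,y) − ψ(σ,ȳ)| ≤ (1/σ)‖y−ȳ‖ + (M/σ²)‖y−ȳ‖² + (2M/σ)‖y−ȳ‖·ψ(σ,y). -/

import Mathlib

open Real

set_option maxHeartbeats 1000000

open scoped RealInnerProductSpace

/-- If `φ` is monotone and differentiable at `0`, its derivative there is nonnegative. -/
lemma aux_mono_deriv_nonneg {φ : ℝ → ℝ} {a : ℝ} (hm : Monotone φ)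
    (h : HasDerivAt φ a 0) : 0 ≤ a := by
  have ht : Filter.Tendsto (slope φ 0) (nhdsWithin 0 (Set.Ioi 0)) (nhds a) :=
    (hasDerivAt_iff_tendsto_slope.mp h).mono_left
      (nhdsWithin_mono 0 (fun t ht => ne_of_gt ht))
  refine ge_of_tendsto ht ?_
  filter_upwards [self_mem_nhdsWithin] with t ht
  have htpos : (0:ℝ) < t := ht
  have h1 : φ 0 ≤ φ t := hm htpos.le
  rw [slope_def_field]
  have h2 : (0:ℝ) ≤ (φ t - φ 0) / (t - 0) := by
    apply div_nonneg <;> linarith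
  simpa [div_eq_mul_inv] using h2

variable {E : Type*} [NormedAddCommGroup E] [InnerProductSpace ℝ E] [CompleteSpace E]

lemma aux_grad_contDiff {f : E → ℝ} (hf : ContDiff ℝ 2 f) : ContDiff ℝ 1 (gradient f) := by
  have h : gradient f = fun x => (InnerProductSpace.toDual ℝ E).symm (fderiv ℝ f x) := rfl
  rw [h]
  exact (InnerProductSpace.toDual ℝ E).symm.contDiff.comp
    (hf.fderiv_right (by norm_num))

lemma aux_fderiv_inner {f : E → ℝ} (hf : Differentiable ℝ f) (z w : E) :
    fderiv ℝ f z w = ⟪gradient f z, w⟫ := by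
  have h := (hf z).hasGradientAt
  rw [hasGradientAt_iff_hasFDerivAt] at h
  rw [h.fderiv]
  simp

/-- PSD of the Hessian of a convex `C²` function. -/
lemma aux_psd {f : E → ℝ} (hf : ContDiff ℝ 2 f) (hconv : ConvexOn ℝ Set.univ f)
    (x v : E) : 0 ≤ ⟪(fderiv ℝ (gradient f) x) v, v⟫ := by
  have hgd : Differentiable ℝ (gradient f) := (aux_grad_contDiff hf).differentiable (by norm_num)
  have hfd : Differentiable ℝ f := hf.differentiable (by norm_num)
  have hc : ∀ t : ℝ, HasDerivAt (fun t : ℝ => x + t • v) v t := by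
    intro t
    simpa using ((hasDerivAt_id t).smul_const v).const_add x
  set q : ℝ → ℝ := fun t => f (x + t • v) with hqdef
  have hq' : ∀ t, HasDerivAt q (⟪gradient f (x + t • v), v⟫) t := by
    intro t
    have h2 := ((hfd (x + t • v)).hasFDerivAt).comp_hasDerivAt t (hc t)
    rwa [aux_fderiv_inner hfd] at h2
  have hqconv : ConvexOn ℝ Set.univ q := by
    have h3 := hconv.comp_affineMap (AffineMap.lineMap x (x + v) : ℝ →ᵃ[ℝ] E)
    have heq : (f ∘ (AffineMap.lineMap x (x + v) : ℝ →ᵃ[ℝ] E)) = q := by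
      funext t
      simp [hqdef, AffineMap.lineMap_apply, add_comm]
    rw [heq] at h3
    simpa using h3
  have hmono : Monotone (deriv q) := by
    have h4 := hqconv.monotoneOn_deriv (fun t _ => (hq' t).differentiableAt)
    rwa [monotoneOn_univ] at h4
  have hderiv : deriv q = fun t => ⟪gradient f (x + t • v), v⟫ :=
    funext fun t => (hq' t).deriv
  rw [hderiv] at hmono
  have hF : HasDerivAt (fun t : ℝ => gradient f (x + t • v))
      ((fderiv ℝ (gradient f) x) v) 0 := by
    have h5 := ((hgd (x + (0:ℝ) • v)).hasFDerivAt).comp_hasDerivAt 0 (hc 0)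
    simpa [Function.comp_def] using h5
  have hφ : HasDerivAt (fun t : ℝ => ⟪gradient f (x + t • v), v⟫)
      (⟪(fderiv ℝ (gradient f) x) v, v⟫) 0 := by
    have h6 := hF.inner ℝ (hasDerivAt_const (0:ℝ) v)
    simpa using h6
  exact aux_mono_deriv_nonneg hmono hφ

/-- Perturbation bound for `ψ(σ,y) = (1/σ)‖(∇²f(y)+σI)⁻¹∇f(y)‖`, stated via the
regularized Newton steps `d` and `d̄` at `y` and `ȳ`:
`|ψ(σ,y) − ψ(σ,ȳ)| ≤ (1/σ)‖y−ȳ‖ + (M/σ²)‖y−ȳ‖² + (2M/σ)‖y−ȳ‖ ψ(σ,y)`. -/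
theorem stmt15 {n : ℕ} (f : EuclideanSpace ℝ (Fin n) → ℝ) (M σ : ℝ)
    (y ybar d dbar : EuclideanSpace ℝ (Fin n))
    (hf : ContDiff ℝ 2 f) (hconv : ConvexOn ℝ Set.univ f) (hM : 0 < M) (hσ : 0 < σ)
    (hLip : ∀ u v : EuclideanSpace ℝ (Fin n),
      ‖fderiv ℝ (gradient f) u - fderiv ℝ (gradient f) v‖ ≤ M * ‖u - v‖)
    (hd : (fderiv ℝ (gradient f) y) d + σ • d = - gradient f y)
    (hdbar : (fderiv ℝ (gradient f) ybar) dbar + σ • dbar = - gradient f ybar) :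
    |‖d‖ / σ - ‖dbar‖ / σ| ≤
      1 / σ * ‖y - ybar‖ + M / σ ^ 2 * ‖y - ybar‖ ^ 2
        + 2 * M / σ * ‖y - ybar‖ * (‖d‖ / σ) := by
  set g : EuclideanSpace ℝ (Fin n) → EuclideanSpace ℝ (Fin n) := gradient f with hgdef
  have hgd : Differentiable ℝ g := (aux_grad_contDiff hf).differentiable (by norm_num)
  set Hb := fderiv ℝ g ybar with hHb
  set Hy := fderiv ℝ g y with hHy
  set u := y - ybar with hu
  set e := dbar - d with he
  set A := Hb + σ • ContinuousLinearMap.id ℝ (EuclideanSpace ℝ (Fin n)) with hAdef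
  have hA : ∀ z, A z = Hb z + σ • z := by
    intro z; simp [hAdef]
  have hpsd : ∀ w, 0 ≤ ⟪Hb w, w⟫ := fun w => aux_psd hf hconv ybar w
  have hAlow : ∀ z, σ * ‖z‖ ^ 2 ≤ ⟪A z, z⟫ := by
    intro z
    rw [hA, inner_add_left, real_inner_smul_left, real_inner_self_eq_norm_sq]
    linarith [hpsd z]
  have hsurj : Function.Surjective A := by
    have hinj : Function.Injective A := by
      intro a b hab
      have h0 : A (a - b) = 0 := by rw [map_sub, hab, sub_self]
      have h1 := hAlow (a - b)
      rw [h0, inner_zero_left] at h1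
      have h2 : ‖a - b‖ ^ 2 ≤ 0 := by nlinarith
      have h3 : ‖a - b‖ ^ 2 = 0 := le_antisymm h2 (sq_nonneg _)
      have h4 : ‖a - b‖ = 0 := by
        have := sq_nonneg ‖a - b‖
        nlinarith [norm_nonneg (a - b)]
      exact sub_eq_zero.mp (norm_eq_zero.mp h4)
    exact (LinearMap.injective_iff_surjective
      (f := (A : EuclideanSpace ℝ (Fin n) →ₗ[ℝ] EuclideanSpace ℝ (Fin n)))).mp hinj
  obtain ⟨v, hv⟩ := hsurj u
  set e1 := Hb v with he1
  set e2 := e - e1 with he2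
  set w := (g y - g ybar - Hb u) + (Hy d - Hb d) with hwdef
  have heq : A e = (g y - g ybar) + (Hy d - Hb d) := by
    have hb1 : Hb dbar = - g ybar - σ • dbar := eq_sub_of_add_eq hdbar
    have hy1 : g y = - Hy d - σ • d := by
      have h7 : g y = -(Hy d + σ • d) := by rw [hd, neg_neg]
      rw [h7]; abel
    rw [he, hA, map_sub, smul_sub, hb1, hy1]
    abel
  have hAe1 : A e1 = Hb u := by
    rw [he1, hA, ← map_smul, ← map_add, ← hA, hv]
  have hAe2 : A e2 = w := by
    rw [he2, map_sub, heq, hAe1, hwdef]; abel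
  have hp1 : 0 ≤ ⟪e1, v⟫ := by rw [he1]; exact hpsd v
  have hbound1 : ‖e1‖ ≤ ‖u‖ := by
    have h8 : ‖u‖ ^ 2 = ‖e1‖ ^ 2 + 2 * (σ * ⟪e1, v⟫) + σ ^ 2 * ‖v‖ ^ 2 := by
      rw [← hv, hA, he1, norm_add_sq_real, real_inner_smul_right, norm_smul,
        Real.norm_eq_abs, mul_pow, sq_abs]
    nlinarith [norm_nonneg e1, norm_nonneg u, sq_nonneg ‖v‖]
  have hbound2 : σ * ‖e2‖ ≤ ‖w‖ := by
    have h9 : σ * ‖e2‖ ^ 2 ≤ ⟪A e2, e2⟫ := hAlow e2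
    rw [hAe2] at h9
    have h10 : ⟪w, e2⟫ ≤ ‖w‖ * ‖e2‖ := real_inner_le_norm w e2
    rcases eq_or_lt_of_le (norm_nonneg e2) with h11 | h11
    · rw [← h11]; simpa using norm_nonneg w
    · nlinarith
  have hterm2 : ‖Hy d - Hb d‖ ≤ M * ‖u‖ * ‖d‖ := by
    have h12 : Hy d - Hb d = (Hy - Hb) d := by simp
    rw [h12]
    calc ‖(Hy - Hb) d‖ ≤ ‖Hy - Hb‖ * ‖d‖ := (Hy - Hb).le_opNorm d
      _ ≤ M * ‖u‖ * ‖d‖ := by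
          apply mul_le_mul_of_nonneg_right _ (norm_nonneg d)
          rw [hu]
          exact hLip y ybar
  have hterm1 : ‖g y - g ybar - Hb u‖ ≤ M * ‖u‖ * ‖u‖ := by
    set p := fun z => g z - Hb z with hpdef
    have hpd : ∀ z ∈ Metric.closedBall ybar ‖u‖, DifferentiableAt ℝ p z :=
      fun z _ => (hgd z).sub Hb.differentiable.differentiableAt
    have hfp : ∀ z, fderiv ℝ p z = fderiv ℝ g z - Hb := by
      intro z
      rw [hpdef]
      rw [fderiv_fun_sub (hgd z) Hb.differentiable.differentiableAt]
      rw [Hb.fderiv]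
    have hbd : ∀ z ∈ Metric.closedBall ybar ‖u‖, ‖fderiv ℝ p z‖ ≤ M * ‖u‖ := by
      intro z hz
      rw [hfp z]
      calc ‖fderiv ℝ g z - Hb‖ ≤ M * ‖z - ybar‖ := hLip z ybar
        _ ≤ M * ‖u‖ := by
            apply mul_le_mul_of_nonneg_left _ hM.le
            rw [← dist_eq_norm]
            exact Metric.mem_closedBall.mp hz
    have hmem1 : ybar ∈ Metric.closedBall ybar ‖u‖ :=
      Metric.mem_closedBall_self (norm_nonneg u)
    have hmem2 : y ∈ Metric.closedBall ybar ‖u‖ := by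
      rw [Metric.mem_closedBall, dist_eq_norm, hu]
    have hmv := (convex_closedBall ybar ‖u‖).norm_image_sub_le_of_norm_fderiv_le
      hpd hbd hmem1 hmem2
    have h13 : p y - p ybar = g y - g ybar - Hb u := by
      simp only [hpdef, hu, map_sub]; abel
    rw [h13] at hmv
    calc ‖g y - g ybar - Hb u‖ ≤ M * ‖u‖ * ‖y - ybar‖ := hmv
      _ = M * ‖u‖ * ‖u‖ := by rw [hu]
  have hw : ‖w‖ ≤ M * ‖u‖ * ‖u‖ + M * ‖u‖ * ‖d‖ := by
    rw [hwdef]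
    exact (norm_add_le _ _).trans (add_le_add hterm1 hterm2)
  have hsplit : ‖e‖ ≤ ‖e1‖ + ‖e2‖ := by
    have h14 : e = e1 + e2 := by rw [he2]; abel
    rw [h14]; exact norm_add_le e1 e2
  have habs : |‖d‖ - ‖dbar‖| ≤ ‖e‖ := by
    have h15 := abs_norm_sub_norm_le d dbar
    rwa [norm_sub_rev, ← he] at h15
  have key : |‖d‖ - ‖dbar‖| * σ ≤ ‖u‖ * σ + (M * ‖u‖ * ‖u‖ + M * ‖u‖ * ‖d‖) := by
    have hXe : |‖d‖ - ‖dbar‖| ≤ ‖u‖ + ‖e2‖ :=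
      habs.trans (hsplit.trans (by linarith [hbound1]))
    have h16 := mul_le_mul_of_nonneg_right hXe hσ.le
    have h17 := hbound2.trans hw
    nlinarith
  rw [div_sub_div_same, abs_div, abs_of_pos hσ]
  have hσ2 : (0:ℝ) < σ ^ 2 := by positivity
  have hrhs : 1 / σ * ‖u‖ + M / σ ^ 2 * ‖u‖ ^ 2 + 2 * M / σ * ‖u‖ * (‖d‖ / σ)
      = (‖u‖ * σ + (M * ‖u‖ * ‖u‖ + 2 * (M * ‖u‖ * ‖d‖))) / σ ^ 2 := by
    field_simp; ring
  rw [hrhs, div_le_div_iff₀ hσ hσ2]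
  nlinarith [mul_le_mul_of_nonneg_right key hσ.le,
    mul_nonneg (mul_nonneg (mul_nonneg hM.le (norm_nonneg u)) (norm_nonneg d)) hσ.le]
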